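/- Suppose V : ℝⁿ → ℝ is continuously differentiable and there exist class K∞ functions α₁ ≤ α₂ (pointwise, i.e., α₁(r) ≤ α₂(r)) and a constant d ≥ 0 such that for every x with |π_k(x)| ≥ d: (1) α₁(|π_k(x)|) ≤ V(x) ≤ α₂(|π_k(x)|), and (2) the derivative of V along trajectories of the vector field X is ≤ 0. Then X is fiberwise practically stable with respect to π_k: there exist a class K∞ function γ and constant c ≥ 0 such that sup_t |π_k(x(t,x))| ≤ γ(|π_k(x)|) + c for every initial condition x (with trajectories defined for all t ≥ 0). One can take γ = α₁⁻¹ ∘ α₂ and c = d + α₁⁻¹(α₂(d)). -/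

import Mathlib

open Filter Set

/-- A class `K∞` function. -/
def ClassKInf (γ : ℝ → ℝ) : Prop :=
  ContinuousOn γ (Set.Ici 0) ∧ StrictMonoOn γ (Set.Ici 0) ∧ γ 0 = 0 ∧
    Tendsto γ atTop atTop

lemma ClassKInf.nonneg {α : ℝ → ℝ} (h : ClassKInf α) {r : ℝ} (hr : 0 ≤ r) : 0 ≤ α r := by
  rcases eq_or_lt_of_le hr with h0 | h0
  · rw [← h0, h.2.2.1]
  · have := h.2.1 (le_refl (0:ℝ)) (le_of_lt h0) h0
    rw [h.2.2.1] at this; exact this.le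

/-- Every class `K∞` function has a class `K∞` (left and right) inverse on `[0,∞)`. -/
lemma ClassKInf.exists_inverse {α : ℝ → ℝ} (h : ClassKInf α) :
    ∃ β : ℝ → ℝ, Monotone β ∧ ClassKInf β ∧ (∀ r, 0 ≤ r → β (α r) = r) ∧
      (∀ y, 0 ≤ y → α (β y) = y ∧ 0 ≤ β y) := by
  obtain ⟨hcont, hmono, h0, htop⟩ := h
  -- surjectivity onto [0, ∞)
  have surj : ∀ y : ℝ, 0 ≤ y → ∃ r, 0 ≤ r ∧ α r = y := by
    intro y hy
    obtain ⟨b, hb, hb0⟩ := ((tendsto_atTop.1 htop y).and (eventually_ge_atTop 0)).exists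
    have hy' : y ∈ Icc (α 0) (α b) := ⟨by rw [h0]; exact hy, hb⟩
    have := intermediate_value_Icc hb0 (hcont.mono (Icc_subset_Ici_self))
    obtain ⟨r, hr, hry⟩ := this hy'
    exact ⟨r, hr.1, hry⟩
  classical
  set β : ℝ → ℝ := fun y => if hy : 0 ≤ y then (surj y hy).choose else y with hβdef
  have hαβ : ∀ y, 0 ≤ y → α (β y) = y ∧ 0 ≤ β y := by
    intro y hy
    simp only [hβdef, dif_pos hy]
    exact ⟨(surj y hy).choose_spec.2, (surj y hy).choose_spec.1⟩
  have hβα : ∀ r, 0 ≤ r → β (α r) = r := by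
    intro r hr
    have hαr : 0 ≤ α r := ClassKInf.nonneg ⟨hcont, hmono, h0, htop⟩ hr
    obtain ⟨he, hge⟩ := hαβ (α r) hαr
    exact hmono.injOn hge hr he
  have hβmono : Monotone β := by
    intro y₁ y₂ hy
    by_cases h1 : 0 ≤ y₁
    · have h2 : 0 ≤ y₂ := h1.trans hy
      obtain ⟨he1, hg1⟩ := hαβ y₁ h1
      obtain ⟨he2, hg2⟩ := hαβ y₂ h2
      by_contra hlt
      push_neg at hlt
      have := hmono hg2 hg1 hlt
      rw [he1, he2] at this
      exact absurd hy (not_le.2 this)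
    · push_neg at h1
      by_cases h2 : 0 ≤ y₂
      · have : β y₁ = y₁ := by simp [hβdef, not_le.2 h1]
        rw [this]
        exact h1.le.trans (hαβ y₂ h2).2
      · simp only [hβdef, dif_neg (not_le.2 h1), dif_neg h2]
        exact hy
  have hβsurj : Function.Surjective β := by
    intro b
    rcases le_total 0 b with hb | hb
    · exact ⟨α b, hβα b hb⟩
    · rcases eq_or_lt_of_le hb with he | he
      · exact ⟨α 0, by rw [hβα 0 (le_refl _), he]⟩
      · exact ⟨b, by simp [hβdef, not_le.2 he]⟩
  have hβcont : Continuous β := hβmono.continuous_of_surjective hβsurj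
  have hβ0 : β 0 = 0 := by have := hβα 0 (le_refl _); rwa [h0] at this
  have hβsm : StrictMonoOn β (Ici 0) := by
    intro y₁ h1 y₂ h2 hlt
    rcases lt_or_eq_of_le (hβmono hlt.le) with h | h
    · exact h
    · exfalso
      have e1 := (hαβ y₁ h1).1
      have e2 := (hαβ y₂ h2).1
      rw [← e1, ← e2, h] at hlt
      exact lt_irrefl _ hlt
  have hβtop : Tendsto β atTop atTop := by
    rw [tendsto_atTop_atTop]
    intro b
    refine ⟨max (α (max b 0)) 0, fun a ha => ?_⟩
    have h1 : β (α (max b 0)) ≤ β a := hβmono ((le_max_left _ _).trans ha)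
    rw [hβα (max b 0) (le_max_right _ _)] at h1
    exact (le_max_left b 0).trans h1
  exact ⟨β, hβmono, ⟨hβcont.continuousOn, hβsm, hβ0, hβtop⟩, hβα, hαβ⟩

/-- A Lyapunov-type function sandwiched between class `K∞` functions of `|π_k(x)|`
(for `|π_k(x)| ≥ d`) and nonincreasing along trajectories there implies fiberwise
practical stability with respect to `π_k`. -/
theorem fiberwise_practical_stability (m k : ℕ)
    (flowX : ℝ → EuclideanSpace ℝ (Fin m) × EuclideanSpace ℝ (Fin k) →
      EuclideanSpace ℝ (Fin m) × EuclideanSpace ℝ (Fin k))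
    (hflow0 : ∀ x, flowX 0 x = x)
    (V : EuclideanSpace ℝ (Fin m) × EuclideanSpace ℝ (Fin k) → ℝ)
    (hV : ContDiff ℝ 1 V)
    (α₁ α₂ : ℝ → ℝ) (hα₁ : ClassKInf α₁) (hα₂ : ClassKInf α₂)
    (hle : ∀ r : ℝ, 0 ≤ r → α₁ r ≤ α₂ r)
    (d : ℝ) (hd : 0 ≤ d)
    (hsandwich : ∀ x : EuclideanSpace ℝ (Fin m) × EuclideanSpace ℝ (Fin k),
      d ≤ ‖x.2‖ → α₁ ‖x.2‖ ≤ V x ∧ V x ≤ α₂ ‖x.2‖)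
    (hdiff : ∀ x, Differentiable ℝ (fun s : ℝ => V (flowX s x)))
    (hcont : ∀ x, Continuous (fun s : ℝ => flowX s x))
    (hdec : ∀ (x) (t : ℝ), 0 ≤ t → d ≤ ‖(flowX t x).2‖ →
      deriv (fun s : ℝ => V (flowX s x)) t ≤ 0) :
    ∃ (γ : ℝ → ℝ) (c : ℝ), ClassKInf γ ∧ 0 ≤ c ∧
      ∀ (x) (t : ℝ), 0 ≤ t → ‖(flowX t x).2‖ ≤ γ ‖x.2‖ + c := by
  obtain ⟨β, hβmono, hβK, hβα, hαβ⟩ := hα₁.exists_inverse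
  set γ : ℝ → ℝ := fun y => β (α₂ y) with hγdef
  refine ⟨γ, d + β (α₂ d), ?_, ?_, ?_⟩
  · refine ⟨hβK.1.comp hα₂.1 ?_, ?_, ?_, hβK.2.2.2.comp hα₂.2.2.2⟩
    · intro y hy; exact hα₂.nonneg hy
    · intro y₁ h1 y₂ h2 hlt
      exact hβK.2.1 (hα₂.nonneg h1) (hα₂.nonneg h2) (hα₂.2.1 h1 h2 hlt)
    · simp only [hγdef, hα₂.2.2.1, hβK.2.2.1]
  · have := (hαβ (α₂ d) (hα₂.nonneg hd)).2
    linarith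
  · intro x t ht
    set z : ℝ → ℝ := fun s => ‖(flowX s x).2‖ with hzdef
    have hzcont : Continuous z := (continuous_snd.comp (hcont x)).norm
    set r : ℝ := max d ‖x.2‖ with hrdef
    have hr0 : 0 ≤ r := hd.trans (le_max_left _ _)
    have hz0 : z 0 = ‖x.2‖ := by simp [hzdef, hflow0]
    -- key claim
    have key : z t ≤ β (α₂ r) := by
      have hrle : r ≤ β (α₂ r) := by
        have := hβmono (hle r hr0)
        rwa [hβα r hr0] at this
      by_contra hcon
      push_neg at hcon
      have hztr : r < z t := lt_of_le_of_lt hrle hcon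
      set S : Set ℝ := Icc 0 t ∩ z ⁻¹' (Iic r) with hSdef
      have hSne : S.Nonempty := ⟨0, ⟨le_refl _, ht⟩, by
        simp only [mem_preimage, mem_Iic, hz0]; exact le_max_right _ _⟩
      have hSclosed : IsClosed S := (isClosed_Icc).inter (isClosed_Iic.preimage hzcont)
      have hSbdd : BddAbove S := ⟨t, fun s hs => hs.1.2⟩
      set s₀ : ℝ := sSup S with hs0def
      have hs₀mem : s₀ ∈ S := hSclosed.csSup_mem hSne hSbdd
      have hs₀t : s₀ < t := by
        rcases lt_or_eq_of_le hs₀mem.1.2 with h | h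
        · exact h
        · exfalso; have := hs₀mem.2; rw [h] at this
          exact absurd hztr (not_lt.2 this)
      have hs₀0 : 0 ≤ s₀ := hs₀mem.1.1
      have hgt : ∀ s ∈ Ioc s₀ t, r < z s := by
        intro s hs
        by_contra hc
        push_neg at hc
        have : s ∈ S := ⟨⟨hs₀0.trans hs.1.le, hs.2⟩, hc⟩
        exact absurd (le_csSup hSbdd this) (not_le.2 hs.1)
      have hzr : z s₀ = r := by
        refine le_antisymm hs₀mem.2 ?_
        have htend : Tendsto z (nhdsWithin s₀ (Ioi s₀)) (nhds (z s₀)) :=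
          (hzcont.tendsto s₀).mono_left nhdsWithin_le_nhds
        refine ge_of_tendsto htend ?_
        filter_upwards [Ioc_mem_nhdsGT_of_mem ⟨le_refl _, hs₀t⟩] with s hs
        exact (hgt s hs).le
      have hge : ∀ s ∈ Icc s₀ t, d ≤ z s := by
        intro s hs
        rcases eq_or_lt_of_le hs.1 with he | hlt
        · rw [← he, hzr]; exact le_max_left _ _
        · exact (le_max_left d ‖x.2‖).trans (hgt s ⟨hlt, hs.2⟩).le
      -- V is nonincreasing on [s₀, t]
      have hanti : AntitoneOn (fun s : ℝ => V (flowX s x)) (Icc s₀ t) := by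
        refine antitoneOn_of_deriv_nonpos (convex_Icc s₀ t)
          ((hdiff x).continuous.continuousOn) ((hdiff x).differentiableOn) ?_
        intro s hs
        rw [interior_Icc] at hs
        exact hdec x s (hs₀0.trans hs.1.le) (hge s ⟨hs.1.le, hs.2.le⟩)
      have hVle : V (flowX t x) ≤ V (flowX s₀ x) :=
        hanti ⟨le_refl _, hs₀t.le⟩ ⟨hs₀t.le, le_refl _⟩ hs₀t.le
      have hdzt : d ≤ z t := (le_max_left d ‖x.2‖).trans hztr.le
      have h1 : α₁ (z t) ≤ V (flowX t x) := (hsandwich _ hdzt).1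
      have h2 : V (flowX s₀ x) ≤ α₂ r := by
        have hdz : d ≤ ‖(flowX s₀ x).2‖ := by
          have e : ‖(flowX s₀ x).2‖ = r := hzr
          rw [e]; exact le_max_left _ _
        have h := (hsandwich (flowX s₀ x) hdz).2
        have e : ‖(flowX s₀ x).2‖ = r := hzr
        rwa [e] at h
      have hrr : α₁ (z t) ≤ α₂ r := h1.trans (hVle.trans h2)
      have hβnn : 0 ≤ β (α₂ r) := (hαβ (α₂ r) (hα₂.nonneg hr0)).2
      have : α₁ (β (α₂ r)) < α₁ (z t) :=
        hα₁.2.1 hβnn (hβnn.trans hcon.le) hcon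
      rw [(hαβ (α₂ r) (hα₂.nonneg hr0)).1] at this
      exact absurd hrr (not_le.2 this)
    -- conclude
    have hγnn : ∀ y : ℝ, 0 ≤ y → 0 ≤ γ y := by
      intro y hy; exact (hαβ (α₂ y) (hα₂.nonneg hy)).2
    have hγx : γ ‖x.2‖ = β (α₂ ‖x.2‖) := rfl
    have hzt : ‖(flowX t x).2‖ = z t := rfl
    rw [hzt, hγx]
    rcases le_total d ‖x.2‖ with hcase | hcase
    · have he : r = ‖x.2‖ := max_eq_right hcase
      rw [he] at key
      have h3 : 0 ≤ β (α₂ d) := hγnn d hd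
      linarith
    · have he : r = d := max_eq_left hcase
      rw [he] at key
      have h3 : 0 ≤ β (α₂ ‖x.2‖) := hγnn ‖x.2‖ (norm_nonneg _)
      linarith
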